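/- arXiv:2004.07728 — 3 statements merged into one kernel-verified Lean document; each statement's English description precedes it below -/
import Mathlib

section
/- The function d(a,b) = |a − b| / √(a² + b² + c) on the nonnegative reals (with fixed constant c > 0) satisfies the triangle inequality: d(a,z) ≤ d(a,b) + d(b,z) for all a, b, z ≥ 0. -/
private lemma le_of_sq_le_sq' {x y : ℝ} (hx : 0 ≤ x) (hy : 0 ≤ y) (h : x^2 ≤ y^2) : x ≤ y := by
  nlinarith [h, hx, hy]

private lemma L1 (c a z b : ℝ) (hc : 0 < c) (ha : 0 ≤ a) (haz : a ≤ z) (hzb : z ≤ b) :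
    (z - a) / Real.sqrt (a^2 + z^2 + c) ≤ (b - a) / Real.sqrt (a^2 + b^2 + c) := by
  have hC : (0:ℝ) < Real.sqrt (a^2 + z^2 + c) := Real.sqrt_pos.2 (by positivity)
  have hA : (0:ℝ) < Real.sqrt (a^2 + b^2 + c) := Real.sqrt_pos.2 (by positivity)
  rw [div_le_div_iff₀ hC hA]
  have hC2 : (Real.sqrt (a^2 + z^2 + c))^2 = a^2 + z^2 + c := Real.sq_sqrt (by positivity)
  have hA2 : (Real.sqrt (a^2 + b^2 + c))^2 = a^2 + b^2 + c := Real.sq_sqrt (by positivity)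
  apply le_of_sq_le_sq' (mul_nonneg (sub_nonneg.2 haz) hA.le)
    (mul_nonneg (sub_nonneg.2 (haz.trans hzb)) hC.le)
  have e1 : ((z - a) * Real.sqrt (a^2 + b^2 + c))^2 = (z-a)^2 * (a^2 + b^2 + c) := by
    rw [mul_pow, hA2]
  have e2 : ((b - a) * Real.sqrt (a^2 + z^2 + c))^2 = (b-a)^2 * (a^2 + z^2 + c) := by
    rw [mul_pow, hC2]
  rw [e1, e2]
  have t1 : 0 ≤ (b - z) * ((b + z - 2*a) * (a^2 + c)) := by
    apply mul_nonneg (by linarith) (mul_nonneg (by linarith) (by positivity))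
  have t2 : 0 ≤ (a * (b - z)) * ((b - a)*z + (z - a)*b) := by
    apply mul_nonneg (mul_nonneg ha (by linarith))
    have : 0 ≤ (b - a)*z := mul_nonneg (by linarith) (ha.trans haz)
    have : 0 ≤ (z - a)*b := mul_nonneg (by linarith) ((ha.trans haz).trans hzb)
    linarith
  nlinarith [t1, t2]

private lemma L2 (c a z b : ℝ) (hc : 0 < c) (hb : 0 ≤ b) (hba : b ≤ a) (haz : a ≤ z) :
    (z - a) / Real.sqrt (a^2 + z^2 + c) ≤ (z - b) / Real.sqrt (b^2 + z^2 + c) := by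
  have hC : (0:ℝ) < Real.sqrt (a^2 + z^2 + c) := Real.sqrt_pos.2 (by positivity)
  have hB : (0:ℝ) < Real.sqrt (b^2 + z^2 + c) := Real.sqrt_pos.2 (by positivity)
  rw [div_le_div_iff₀ hC hB]
  have hC2 : (Real.sqrt (a^2 + z^2 + c))^2 = a^2 + z^2 + c := Real.sq_sqrt (by positivity)
  have hB2 : (Real.sqrt (b^2 + z^2 + c))^2 = b^2 + z^2 + c := Real.sq_sqrt (by positivity)
  apply le_of_sq_le_sq' (mul_nonneg (sub_nonneg.2 haz) hB.le)
    (mul_nonneg (sub_nonneg.2 (hba.trans haz)) hC.le)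
  have h1 : ((z - a) * Real.sqrt (b^2 + z^2 + c))^2 = (z-a)^2 * (b^2 + z^2 + c) := by
    rw [mul_pow, hB2]
  have h2 : ((z - b) * Real.sqrt (a^2 + z^2 + c))^2 = (z-b)^2 * (a^2 + z^2 + c) := by
    rw [mul_pow, hC2]
  rw [h1, h2]
  have t1 : 0 ≤ (a - b) * ((2*z - a - b) * (z^2 + c)) := by
    apply mul_nonneg (by linarith) (mul_nonneg (by linarith) (by positivity))
  have t2 : 0 ≤ (z * (a - b)) * ((z - b)*a + (z - a)*b) := by
    apply mul_nonneg (mul_nonneg (hb.trans (hba.trans haz)) (by linarith))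
    have : 0 ≤ (z - b)*a := mul_nonneg (by linarith) (hb.trans hba)
    have : 0 ≤ (z - a)*b := mul_nonneg (by linarith) hb
    linarith
  nlinarith [t1, t2]


private lemma keypoly (c a b z : ℝ) (hc : 0 ≤ c) (ha : 0 ≤ a) (hab : a ≤ b) (hbz : b ≤ z) :
    (z - a)^2 * ((a^2 + b^2 + c) * (b^2 + z^2 + c)) ≤
      ((b - a)^2 * (b^2 + z^2 + c) + (z - b)^2 * (a^2 + b^2 + c)
        + 2 * ((b - a) * (z - b)) * (a*b + b*z + c)) * (a^2 + z^2 + c) := by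
  have hp : (0:ℝ) ≤ b - a := by linarith
  have hq : (0:ℝ) ≤ z - b := by linarith
  have h1 : 0 ≤ 2*(b-a)^2*(z-b)^2*c := by positivity
  have h2 : 0 ≤ 3*(b-a)^2*(z-b)^4 := by positivity
  have h3 : 0 ≤ 8*(b-a)^3*(z-b)^3 := by
    have := mul_nonneg (pow_nonneg hp 3) (pow_nonneg hq 3); linarith
  have h4 : 0 ≤ 7*(b-a)^4*(z-b)^2 := by positivity
  have h5 : 0 ≤ 2*(b-a)^5*(z-b) := by
    have := mul_nonneg (pow_nonneg hp 5) hq; linarith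
  have h6 : 0 ≤ 2*a*(b-a)*(z-b)^4 := by
    have := mul_nonneg (mul_nonneg ha hp) (pow_nonneg hq 4); linarith
  have h7 : 0 ≤ 14*a*(b-a)^2*(z-b)^3 := by
    have := mul_nonneg (mul_nonneg ha (pow_nonneg hp 2)) (pow_nonneg hq 3); linarith
  have h8 : 0 ≤ 18*a*(b-a)^3*(z-b)^2 := by
    have := mul_nonneg (mul_nonneg ha (pow_nonneg hp 3)) (pow_nonneg hq 2); linarith
  have h9 : 0 ≤ 6*a*(b-a)^4*(z-b) := by
    have := mul_nonneg (mul_nonneg ha (pow_nonneg hp 4)) hq; linarith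
  have h10 : 0 ≤ 4*a^2*(b-a)*(z-b)^3 := by
    have := mul_nonneg (mul_nonneg (pow_nonneg ha 2) hp) (pow_nonneg hq 3); linarith
  have h11 : 0 ≤ 12*a^2*(b-a)^2*(z-b)^2 := by positivity
  have h12 : 0 ≤ 4*a^2*(b-a)^3*(z-b) := by
    have := mul_nonneg (mul_nonneg (pow_nonneg ha 2) (pow_nonneg hp 3)) hq; linarith
  nlinarith [h1,h2,h3,h4,h5,h6,h7,h8,h9,h10,h11,h12]

private lemma main_le (c a b z : ℝ) (hc : 0 < c) (ha : 0 ≤ a) (hb : 0 ≤ b) (hz : 0 ≤ z)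
    (haz : a ≤ z) :
    |a - z| / Real.sqrt (a^2 + z^2 + c) ≤
      |a - b| / Real.sqrt (a^2 + b^2 + c) + |b - z| / Real.sqrt (b^2 + z^2 + c) := by
  have hC : (0:ℝ) < Real.sqrt (a^2 + z^2 + c) := Real.sqrt_pos.2 (by positivity)
  have hA : (0:ℝ) < Real.sqrt (a^2 + b^2 + c) := Real.sqrt_pos.2 (by positivity)
  have hB : (0:ℝ) < Real.sqrt (b^2 + z^2 + c) := Real.sqrt_pos.2 (by positivity)
  have haz' : |a - z| = z - a := by rw [abs_sub_comm]; exact abs_of_nonneg (by linarith)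
  rcases le_total b a with hba | hab
  · -- b ≤ a ≤ z : second term alone suffices
    have h2 : |b - z| = z - b := by rw [abs_sub_comm]; exact abs_of_nonneg (by linarith)
    have := L2 c a z b hc hb hba haz
    have hnn : 0 ≤ |a - b| / Real.sqrt (a^2 + b^2 + c) := by positivity
    rw [haz', h2]; linarith
  rcases le_total z b with hzb | hbz
  · -- a ≤ z ≤ b : first term alone suffices
    have h1 : |a - b| = b - a := by rw [abs_sub_comm]; exact abs_of_nonneg (by linarith)
    have := L1 c a z b hc ha haz hzb
    have hnn : 0 ≤ |b - z| / Real.sqrt (b^2 + z^2 + c) := by positivity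
    rw [haz', h1]; linarith
  · -- a ≤ b ≤ z : main case
    have h1 : |a - b| = b - a := by rw [abs_sub_comm]; exact abs_of_nonneg (by linarith)
    have h2 : |b - z| = z - b := by rw [abs_sub_comm]; exact abs_of_nonneg (by linarith)
    have hA2 : (Real.sqrt (a^2 + b^2 + c))^2 = a^2 + b^2 + c := Real.sq_sqrt (by positivity)
    have hB2 : (Real.sqrt (b^2 + z^2 + c))^2 = b^2 + z^2 + c := Real.sq_sqrt (by positivity)
    have hC2 : (Real.sqrt (a^2 + z^2 + c))^2 = a^2 + z^2 + c := Real.sq_sqrt (by positivity)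
    have hpq : 0 ≤ (b - a) * (z - b) := mul_nonneg (by linarith) (by linarith)
    have hAB : a*b + b*z + c ≤ Real.sqrt (a^2 + b^2 + c) * Real.sqrt (b^2 + z^2 + c) := by
      apply le_of_sq_le_sq' (by positivity) (by positivity)
      rw [mul_pow, hA2, hB2]
      nlinarith [sq_nonneg (a*z - b^2), mul_nonneg hc.le (sq_nonneg (a - b)),
        mul_nonneg hc.le (sq_nonneg (b - z))]
    have main2 : (z - a) * (Real.sqrt (a^2 + b^2 + c) * Real.sqrt (b^2 + z^2 + c)) ≤
        ((b - a) * Real.sqrt (b^2 + z^2 + c) + (z - b) * Real.sqrt (a^2 + b^2 + c)) *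
          Real.sqrt (a^2 + z^2 + c) := by
      apply le_of_sq_le_sq' (mul_nonneg (by linarith) (by positivity))
        (mul_nonneg (add_nonneg (mul_nonneg (by linarith) hB.le)
          (mul_nonneg (by linarith) hA.le)) hC.le)
      have e1 : ((z - a) * (Real.sqrt (a^2 + b^2 + c) * Real.sqrt (b^2 + z^2 + c)))^2
          = (z - a)^2 * ((a^2 + b^2 + c) * (b^2 + z^2 + c)) := by
        rw [mul_pow, mul_pow, hA2, hB2]
      have e2 : (((b - a) * Real.sqrt (b^2 + z^2 + c) + (z - b) * Real.sqrt (a^2 + b^2 + c)) *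
            Real.sqrt (a^2 + z^2 + c))^2
          = ((b - a)^2 * (b^2 + z^2 + c) + (z - b)^2 * (a^2 + b^2 + c)
              + 2 * ((b - a) * (z - b)) *
                (Real.sqrt (a^2 + b^2 + c) * Real.sqrt (b^2 + z^2 + c)))
            * (a^2 + z^2 + c) := by
        rw [mul_pow, add_sq, mul_pow, mul_pow, hA2, hB2, hC2]; ring
      rw [e1, e2]
      have hkey := keypoly c a b z hc.le ha hab hbz
      have hcross : 2 * ((b - a) * (z - b)) * (a*b + b*z + c) * (a^2 + z^2 + c) ≤
          2 * ((b - a) * (z - b)) *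
            (Real.sqrt (a^2 + b^2 + c) * Real.sqrt (b^2 + z^2 + c)) * (a^2 + z^2 + c) := by
        apply mul_le_mul_of_nonneg_right _ (by positivity)
        exact mul_le_mul_of_nonneg_left hAB (by linarith)
      linarith [hkey, hcross]
    rw [haz', h1, h2, div_add_div _ _ hA.ne' hB.ne', div_le_div_iff₀ hC (mul_pos hA hB)]
    linarith [main2]

theorem dists_scalar_triangle (c : ℝ) (hc : 0 < c) (a b z : ℝ)
    (ha : 0 ≤ a) (hb : 0 ≤ b) (hz : 0 ≤ z) :
    |a - z| / Real.sqrt (a^2 + z^2 + c) ≤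
      |a - b| / Real.sqrt (a^2 + b^2 + c) + |b - z| / Real.sqrt (b^2 + z^2 + c) := by
  rcases le_total a z with haz | hza
  · exact main_le c a b z hc ha hb hz haz
  · have h := main_le c z b a hc hz hb ha hza
    calc |a - z| / Real.sqrt (a^2 + z^2 + c)
        = |z - a| / Real.sqrt (z^2 + a^2 + c) := by rw [abs_sub_comm, add_comm (a^2)]
      _ ≤ |z - b| / Real.sqrt (z^2 + b^2 + c) + |b - a| / Real.sqrt (b^2 + a^2 + c) := h
      _ = |a - b| / Real.sqrt (a^2 + b^2 + c) + |b - z| / Real.sqrt (b^2 + z^2 + c) := by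
          rw [abs_sub_comm z b, abs_sub_comm b a, add_comm (z^2) (b^2), add_comm (b^2) (a^2),
            add_comm]
end

section
/- For vectors x, y ∈ ℝⁿ with means μ_x, μ_y, variances σ_x², σ_y², covariance σ_xy, and constants c₁, c₂ > 0, if l(x,y) = (2μ_xμ_y + c₁)/(μ_x² + μ_y² + c₁) = 1 and s(x,y) = (2σ_xy + c₂)/(σ_x² + σ_y² + c₂) = 1, then x = y. -/
theorem dists_identity_of_indiscernibles {n : ℕ} (hn : 1 ≤ n) (x y : Fin n → ℝ)
    (c₁ c₂ : ℝ) (hc₁ : 0 < c₁) (hc₂ : 0 < c₂)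
    (hl : (2 * ((∑ i, x i) / n) * ((∑ i, y i) / n) + c₁) /
          (((∑ i, x i) / n)^2 + ((∑ i, y i) / n)^2 + c₁) = 1)
    (hs : (2 * ((∑ i, (x i - (∑ j, x j) / n) * (y i - (∑ j, y j) / n)) / n) + c₂) /
          ((∑ i, (x i - (∑ j, x j) / n)^2) / n + (∑ i, (y i - (∑ j, y j) / n)^2) / n + c₂) = 1) :
    x = y := by
  have hn0 : (0:ℝ) < n := by exact_mod_cast Nat.lt_of_lt_of_le Nat.zero_lt_one hn
  set μx : ℝ := (∑ i, x i) / n with hμx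
  set μy : ℝ := (∑ i, y i) / n with hμy
  have hd1 : (0:ℝ) < μx^2 + μy^2 + c₁ := by positivity
  rw [div_eq_one_iff_eq hd1.ne'] at hl
  have hμ : μx = μy := by nlinarith [sq_nonneg (μx - μy)]
  have hd2 : (0:ℝ) < (∑ i, (x i - μx)^2) / n + (∑ i, (y i - μy)^2) / n + c₂ := by
    have h1 : (0:ℝ) ≤ ∑ i, (x i - μx)^2 := Finset.sum_nonneg fun i _ => sq_nonneg _
    have h2 : (0:ℝ) ≤ ∑ i, (y i - μy)^2 := Finset.sum_nonneg fun i _ => sq_nonneg _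
    positivity
  rw [div_eq_one_iff_eq hd2.ne'] at hs
  have key : 2 * (∑ i, (x i - μx) * (y i - μy)) = (∑ i, (x i - μx)^2) + (∑ i, (y i - μy)^2) := by
    have := hs
    field_simp at this
    linarith
  have hsum0 : ∑ i, (x i - y i)^2 = 0 := by
    have : ∀ i ∈ Finset.univ, (x i - y i)^2
        = (x i - μx)^2 + (y i - μy)^2 - 2 * ((x i - μx) * (y i - μy)) := by
      intro i _
      rw [hμ]; ring
    rw [Finset.sum_congr rfl this, Finset.sum_sub_distrib, Finset.sum_add_distrib,
      ← Finset.mul_sum]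
    linarith
  funext i
  have hz : (x i - y i)^2 = 0 := by
    have := (Finset.sum_eq_zero_iff_of_nonneg (fun i _ => sq_nonneg (x i - y i))).mp hsum0 i (Finset.mem_univ i)
    exact this
  have := sq_eq_zero_iff.mp hz
  linarith
end

section
/- Let d(a,b) = |a − b|/√(a² + b² + c) for a, b ≥ 0 and fixed c > 0. Then d is a metric on [0, ∞): it is nonnegative, symmetric, vanishes exactly when a = b, and satisfies the triangle inequality. -/
private lemma sqrt_mul_le_aux {x y P Q : ℝ} (hx : 0 ≤ x) (hy : 0 ≤ y) (hP : 0 ≤ P)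
    (hQ : 0 ≤ Q) (h : x^2 * P ≤ y^2 * Q) : x * Real.sqrt P ≤ y * Real.sqrt Q := by
  calc x * Real.sqrt P = Real.sqrt (x^2 * P) := by
        rw [Real.sqrt_mul (by positivity) P, Real.sqrt_sq hx]
    _ ≤ Real.sqrt (y^2 * Q) := Real.sqrt_le_sqrt h
    _ = y * Real.sqrt Q := by rw [Real.sqrt_mul (by positivity) Q, Real.sqrt_sq hy]

theorem dists_scalar_metric (c : ℝ) (hc : 0 < c) :
    let d : ℝ → ℝ → ℝ := fun a b => |a - b| / Real.sqrt (a^2 + b^2 + c)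
    (∀ a b : ℝ, 0 ≤ a → 0 ≤ b → 0 ≤ d a b) ∧
    (∀ a b : ℝ, 0 ≤ a → 0 ≤ b → d a b = d b a) ∧
    (∀ a b : ℝ, 0 ≤ a → 0 ≤ b → (d a b = 0 ↔ a = b)) ∧
    (∀ a b z : ℝ, 0 ≤ a → 0 ≤ b → 0 ≤ z → d a z ≤ d a b + d b z) := by
  intro d
  have hD : ∀ a b : ℝ, (0:ℝ) < a^2 + b^2 + c := fun a b => by positivity
  have hs : ∀ a b : ℝ, 0 < Real.sqrt (a^2 + b^2 + c) := fun a b => Real.sqrt_pos.2 (hD a b)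
  have hnn : ∀ a b : ℝ, 0 ≤ d a b := fun a b => div_nonneg (abs_nonneg _) (Real.sqrt_nonneg _)
  have hsym : ∀ a b : ℝ, d a b = d b a := by
    intro a b
    show |a - b| / Real.sqrt (a^2 + b^2 + c) = |b - a| / Real.sqrt (b^2 + a^2 + c)
    rw [abs_sub_comm, add_comm (a^2) (b^2)]
  have htri : ∀ a b z : ℝ, 0 ≤ a → 0 ≤ b → 0 ≤ z → a ≤ z → d a z ≤ d a b + d b z := by
    intro a b z ha hb hz haz
    show |a - z| / Real.sqrt (a^2 + z^2 + c) ≤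
        |a - b| / Real.sqrt (a^2 + b^2 + c) + |b - z| / Real.sqrt (b^2 + z^2 + c)
    rcases le_total b a with hba | hab
    · -- b ≤ a ≤ z : d a z ≤ d b z
      have h1 : 0 ≤ |a - b| / Real.sqrt (a^2 + b^2 + c) := by positivity
      have h2 : |a - z| / Real.sqrt (a^2 + z^2 + c) ≤ |b - z| / Real.sqrt (b^2 + z^2 + c) := by
        rw [abs_of_nonpos (by linarith), abs_of_nonpos (by linarith),
            div_le_div_iff₀ (hs a z) (hs b z)]
        apply sqrt_mul_le_aux (by linarith) (by linarith) (hD b z).le (hD a z).le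
        have k1 : (0:ℝ) ≤ (z^2+c)*((a-b)*(2*z-a-b)) :=
          mul_nonneg (by positivity) (mul_nonneg (by linarith) (by linarith))
        have k2 : (0:ℝ) ≤ (z*(a-b))*(a*(z-b)+b*(z-a)) :=
          mul_nonneg (mul_nonneg hz (by linarith))
            (add_nonneg (mul_nonneg ha (by linarith)) (mul_nonneg hb (by linarith)))
        nlinarith [k1, k2]
      linarith
    rcases le_total z b with hzb | hbz
    · -- a ≤ z ≤ b : d a z ≤ d a b
      have h1 : 0 ≤ |b - z| / Real.sqrt (b^2 + z^2 + c) := by positivity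
      have h2 : |a - z| / Real.sqrt (a^2 + z^2 + c) ≤ |a - b| / Real.sqrt (a^2 + b^2 + c) := by
        rw [abs_of_nonpos (by linarith), abs_of_nonpos (by linarith),
            div_le_div_iff₀ (hs a z) (hs a b)]
        apply sqrt_mul_le_aux (by linarith) (by linarith) (hD a b).le (hD a z).le
        have k1 : (0:ℝ) ≤ (a^2+c)*((b-z)*(b+z-2*a)) :=
          mul_nonneg (by positivity) (mul_nonneg (by linarith) (by linarith))
        have k2 : (0:ℝ) ≤ (a*(b-z))*(z*(b-a)+b*(z-a)) :=
          mul_nonneg (mul_nonneg ha (by linarith))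
            (add_nonneg (mul_nonneg hz (by linarith)) (mul_nonneg hb (by linarith)))
        nlinarith [k1, k2]
      linarith
    · -- a ≤ b ≤ z : middle case
      set s1 := Real.sqrt (a^2 + b^2 + c) with hs1def
      set s2 := Real.sqrt (b^2 + z^2 + c) with hs2def
      set s3 := Real.sqrt (a^2 + z^2 + c) with hs3def
      have hs1 : 0 < s1 := hs a b
      have hs2 : 0 < s2 := hs b z
      have hs3 : 0 < s3 := hs a z
      have sq1 : s1^2 = a^2 + b^2 + c := Real.sq_sqrt (hD a b).le
      have sq2 : s2^2 = b^2 + z^2 + c := Real.sq_sqrt (hD b z).le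
      have sq3 : s3^2 = a^2 + z^2 + c := Real.sq_sqrt (hD a z).le
      have h12 : s1 ≤ s2 := Real.sqrt_le_sqrt (by nlinarith)
      have h13 : s1 ≤ s3 := Real.sqrt_le_sqrt (by nlinarith)
      have h32 : s3 ≤ s2 := Real.sqrt_le_sqrt (by nlinarith)
      have e31 : s3^2 - s1^2 = z^2 - b^2 := by rw [sq1, sq3]; ring
      have e32 : s3^2 - s2^2 = a^2 - b^2 := by rw [sq2, sq3]; ring
      have hid : ((b-a)*s2*(s3-s1) + (z-b)*s1*(s3-s2)) * ((s1+s3)*(s2+s3)) =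
          (b-a)*(z-b)*(s2*(z+b)*(s2+s3) - s1*(a+b)*(s1+s3)) := by
        linear_combination ((b-a)*s2*(s2+s3)) * e31 + ((z-b)*s1*(s1+s3)) * e32
      have hbr : 0 ≤ s2*(z+b)*(s2+s3) - s1*(a+b)*(s1+s3) := by
        have t1 : s1*(a+b) ≤ s2*(z+b) :=
          mul_le_mul h12 (by linarith) (by linarith) hs2.le
        have t2 : s1*(a+b)*(s1+s3) ≤ s2*(z+b)*(s2+s3) :=
          mul_le_mul t1 (by linarith) (by linarith) (by positivity)
        linarith
      have hQ : 0 ≤ (b-a)*(z-b)*(s2*(z+b)*(s2+s3) - s1*(a+b)*(s1+s3)) :=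
        mul_nonneg (mul_nonneg (by linarith) (by linarith)) hbr
      have hP : 0 < (s1+s3)*(s2+s3) := by positivity
      have key : 0 ≤ (b-a)*s2*(s3-s1) + (z-b)*s1*(s3-s2) := by
        have hx : (b-a)*s2*(s3-s1) + (z-b)*s1*(s3-s2) =
            ((b-a)*(z-b)*(s2*(z+b)*(s2+s3) - s1*(a+b)*(s1+s3))) / ((s1+s3)*(s2+s3)) := by
          rw [eq_div_iff hP.ne']; exact hid
        rw [hx]; exact div_nonneg hQ hP.le
      rw [abs_of_nonpos (by linarith : a - z ≤ 0), abs_of_nonpos (by linarith : a - b ≤ 0),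
          abs_of_nonpos (by linarith : b - z ≤ 0),
          div_add_div _ _ (ne_of_gt hs1) (ne_of_gt hs2),
          div_le_div_iff₀ hs3 (mul_pos hs1 hs2)]
      have hfin : (-(a-b)*s2 + -(b-z)*s1)*s3 - (-(a-z))*(s1*s2) =
          (b-a)*s2*(s3-s1) + (z-b)*s1*(s3-s2) := by ring
      linarith
  refine ⟨fun a b _ _ => hnn a b, fun a b _ _ => hsym a b, ?_, ?_⟩
  · intro a b _ _
    constructor
    · intro h
      rcases div_eq_zero_iff.1 h with h' | h'
      · exact sub_eq_zero.1 (abs_eq_zero.1 h')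
      · exact absurd h' (hs a b).ne'
    · intro h
      subst h
      show |a - a| / _ = 0
      simp
  · intro a b z ha hb hz
    rcases le_total a z with h | h
    · exact htri a b z ha hb hz h
    · have h2 := htri z b a hz hb ha h
      rw [hsym a z, hsym a b, hsym b z]
      linarith
end
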